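/- Existence and uniqueness of the scalar minimizers: let G be a standard Gaussian, N independent of G with a symmetric distribution satisfying E[N²] < ∞, let σ > 0, ε ≥ 0, β > 0, δ > 0, and define D(γ̃₁, γ̃₂) = √δ · √(E[((|√(γ̃₁²+γ̃₂²)·G + N| − ε/σ)₊)²]) − γ̃₁. If the sublevel set S = {(γ̃₁, γ̃₂) ∈ ℝ² : D(γ̃₁, γ̃₂) ≤ 0} is nonempty, then S is a closed convex set and the optimization problem min over (γ̃₁, γ̃₂) ∈ S of ½(γ̃₂ − β/σ)² + ½γ̃₁² has exactly one minimizer. -/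

import Mathlib

open MeasureTheory ProbabilityTheory Filter Topology

lemma gauss_sq_int' : Integrable (fun x : ℝ => x ^ 2) (gaussianReal 0 1) := by
  rw [gaussianReal_of_var_ne_zero 0 one_ne_zero,
    integrable_withDensity_iff (measurable_gaussianPDF 0 1)
      (ae_of_all _ fun x => ENNReal.ofReal_lt_top)]
  have : (fun x : ℝ => x ^ 2 * (gaussianPDF 0 1 x).toReal)
      = fun x : ℝ => (Real.sqrt (2 * Real.pi))⁻¹ *
        (x ^ (2:ℝ) * Real.exp (-(1/2) * x ^ 2)) := by
    funext x
    rw [gaussianPDF, ENNReal.toReal_ofReal (gaussianPDFReal_nonneg _ _ _), gaussianPDFReal,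
      Real.rpow_two]
    push_cast
    ring_nf
  rw [this]
  exact (integrable_rpow_mul_exp_neg_mul_sq (by norm_num : (0:ℝ) < 1/2)
    (by norm_num : (-1:ℝ) < 2)).const_mul _

lemma l2_cauchy' {α : Type*} [MeasurableSpace α] {μ : Measure α} {f g : α → ℝ}
    (hfm : AEStronglyMeasurable f μ) (hgm : AEStronglyMeasurable g μ)
    (hf0 : ∀ x, 0 ≤ f x) (hg0 : ∀ x, 0 ≤ g x)
    (hf : Integrable (fun x => f x ^ 2) μ) (hg : Integrable (fun x => g x ^ 2) μ) :
    ∫ x, f x * g x ∂μ ≤ Real.sqrt (∫ x, f x ^ 2 ∂μ) * Real.sqrt (∫ x, g x ^ 2 ∂μ) := by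
  have hpq : (2:ℝ).HolderConjugate 2 := Real.HolderConjugate.two_two
  have hfℒ : MemLp f (ENNReal.ofReal 2) μ := by
    rw [show ENNReal.ofReal 2 = 2 by norm_num]
    exact (memLp_two_iff_integrable_sq hfm).2 hf
  have hgℒ : MemLp g (ENNReal.ofReal 2) μ := by
    rw [show ENNReal.ofReal 2 = 2 by norm_num]
    exact (memLp_two_iff_integrable_sq hgm).2 hg
  have := integral_mul_le_Lp_mul_Lq_of_nonneg hpq (ae_of_all _ hf0) (ae_of_all _ hg0) hfℒ hgℒ
  calc ∫ x, f x * g x ∂μ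
      ≤ (∫ a, f a ^ (2:ℝ) ∂μ) ^ (1/(2:ℝ)) * (∫ a, g a ^ (2:ℝ) ∂μ) ^ (1/(2:ℝ)) := this
    _ = Real.sqrt (∫ x, f x ^ 2 ∂μ) * Real.sqrt (∫ x, g x ^ 2 ∂μ) := by
        rw [← Real.sqrt_eq_rpow, ← Real.sqrt_eq_rpow]
        congr 2 <;> · apply integral_congr_ae; filter_upwards with x; rw [Real.rpow_two]

set_option maxHeartbeats 1000000 in
/-- **Existence and uniqueness of the scalar minimizers.** With
`D(γ̃₁, γ̃₂) = √δ √(E[((|√(γ̃₁²+γ̃₂²)G + N| - ε/σ)₊)²]) - γ̃₁`, if the sublevel set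
`S = {(γ̃₁, γ̃₂) : D(γ̃₁, γ̃₂) ≤ 0}` is nonempty then `S` is closed and convex and the problem
`min_{(γ̃₁,γ̃₂) ∈ S} ½(γ̃₂ - β/σ)² + ½γ̃₁²` has exactly one minimizer. -/
theorem hsvr_scalar_problem_unique_minimizer
    (ν : Measure ℝ) [IsProbabilityMeasure ν]
    (hνsymm : ν.map (fun x => -x) = ν)
    (hνmom : Integrable (fun x => x ^ 2) ν)
    (σ ε β δ : ℝ) (hσ : 0 < σ) (hε : 0 ≤ ε) (hβ : 0 < β) (hδ : 0 < δ)
    (D : ℝ × ℝ → ℝ)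
    (hD : D = fun g => Real.sqrt δ * Real.sqrt (∫ z : ℝ × ℝ,
        (max (|Real.sqrt (g.1 ^ 2 + g.2 ^ 2) * z.1 + z.2| - ε / σ) 0) ^ 2
          ∂((gaussianReal 0 1).prod ν)) - g.1)
    (hne : {g : ℝ × ℝ | D g ≤ 0}.Nonempty) :
    IsClosed {g : ℝ × ℝ | D g ≤ 0} ∧
    Convex ℝ {g : ℝ × ℝ | D g ≤ 0} ∧
    (∃! g : ℝ × ℝ, D g ≤ 0 ∧ ∀ g' : ℝ × ℝ, D g' ≤ 0 →
      (1 / 2) * (g.2 - β / σ) ^ 2 + (1 / 2) * g.1 ^ 2 ≤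
      (1 / 2) * (g'.2 - β / σ) ^ 2 + (1 / 2) * g'.1 ^ 2) := by
  set μ : Measure (ℝ × ℝ) := (gaussianReal 0 1).prod ν with hμdef
  set c : ℝ := ε / σ with hcdef
  have hc : 0 ≤ c := div_nonneg hε hσ.le
  set h : ℝ → ℝ × ℝ → ℝ := fun t z => max (|t * z.1 + z.2| - c) 0 with hhdef
  have hcont : ∀ t, Continuous (h t) := fun t =>
    (((((continuous_const.mul continuous_fst).add continuous_snd).abs).sub
      continuous_const)).max continuous_const
  have h0 : ∀ t z, 0 ≤ h t z := fun t z => le_max_right _ _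
  have hle : ∀ t z, h t z ≤ |t| * |z.1| + |z.2| := by
    intro t z
    refine max_le ?_ (by positivity)
    have : |t * z.1 + z.2| ≤ |t| * |z.1| + |z.2| := by
      rw [← abs_mul]; exact abs_add_le _ _
    linarith
  have hsqle : ∀ t z, h t z ^ 2 ≤ 2 * t ^ 2 * z.1 ^ 2 + 2 * z.2 ^ 2 := by
    intro t z
    have h1 := hle t z
    have h2 := h0 t z
    nlinarith [sq_abs t, sq_abs z.1, sq_abs z.2, sq_nonneg (|t| * |z.1| - |z.2|),
      mul_nonneg (abs_nonneg t) (abs_nonneg z.1), abs_nonneg z.2]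
  -- integrability of coordinates
  have hz1 : Integrable (fun z : ℝ × ℝ => z.1 ^ 2) μ := by
    have hmap : μ.map Prod.fst = gaussianReal 0 1 := by
      rw [hμdef, Measure.map_fst_prod]; simp
    have := (integrable_map_measure
      (by rw [hmap]; exact (continuous_pow 2).aestronglyMeasurable)
      measurable_fst.aemeasurable).1 (by rw [hmap]; exact gauss_sq_int')
    exact this
  have hz2 : Integrable (fun z : ℝ × ℝ => z.2 ^ 2) μ := by
    have hmap : μ.map Prod.snd = ν := by
      rw [hμdef, Measure.map_snd_prod]; simp
    have := (integrable_map_measure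
      (by rw [hmap]; exact (continuous_pow 2).aestronglyMeasurable)
      measurable_snd.aemeasurable).1 (by rw [hmap]; exact hνmom)
    exact this
  have hint : ∀ t, Integrable (fun z => h t z ^ 2) μ := by
    intro t
    refine Integrable.mono' ((hz1.const_mul (2 * t ^ 2)).add (hz2.const_mul 2))
      (((hcont t).pow 2).aestronglyMeasurable) (ae_of_all _ fun z => ?_)
    rw [Real.norm_eq_abs, abs_of_nonneg (by positivity)]
    exact hsqle t z
  set ψ : ℝ → ℝ := fun t => Real.sqrt (∫ z, h t z ^ 2 ∂μ) with hψdef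
  have hψ0 : ∀ t, 0 ≤ ψ t := fun t => Real.sqrt_nonneg _
  have hψsq : ∀ t, ψ t ^ 2 = ∫ z, h t z ^ 2 ∂μ := fun t =>
    Real.sq_sqrt (integral_nonneg fun z => sq_nonneg _)
  have hmul_int : ∀ x y, Integrable (fun z => h x z * h y z) μ := by
    intro x y
    refine Integrable.mono' (((hint x).add (hint y)).const_mul (1/2))
      (((hcont x).mul (hcont y)).aestronglyMeasurable) (ae_of_all _ fun z => ?_)
    rw [Real.norm_eq_abs, abs_of_nonneg (mul_nonneg (h0 x z) (h0 y z))]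
    simp only [Pi.add_apply]
    nlinarith [sq_nonneg (h x z - h y z)]
  have hcs : ∀ x y, ∫ z, h x z * h y z ∂μ ≤ ψ x * ψ y := fun x y =>
    l2_cauchy' (hcont x).aestronglyMeasurable (hcont y).aestronglyMeasurable
      (h0 x) (h0 y) (hint x) (hint y)
  -- convexity of ψ
  have key : ∀ x y a b : ℝ, 0 ≤ a → 0 ≤ b → a + b = 1 →
      ψ (a * x + b * y) ≤ a * ψ x + b * ψ y := by
    intro x y a b ha hb hab
    have hpt : ∀ z : ℝ × ℝ, h (a * x + b * y) z ≤ a * h x z + b * h y z := by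
      intro z
      have e : (a * x + b * y) * z.1 + z.2 = a * (x * z.1 + z.2) + b * (y * z.1 + z.2) := by
        linear_combination -z.2 * hab
      have habs : |(a * x + b * y) * z.1 + z.2| ≤ a * |x * z.1 + z.2| + b * |y * z.1 + z.2| := by
        rw [e]
        calc |a * (x * z.1 + z.2) + b * (y * z.1 + z.2)|
            ≤ |a * (x * z.1 + z.2)| + |b * (y * z.1 + z.2)| := abs_add_le _ _
          _ = a * |x * z.1 + z.2| + b * |y * z.1 + z.2| := by
              rw [abs_mul, abs_mul, abs_of_nonneg ha, abs_of_nonneg hb]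
      refine max_le ?_ (add_nonneg (mul_nonneg ha (h0 x z)) (mul_nonneg hb (h0 y z)))
      have h1 : |x * z.1 + z.2| - c ≤ h x z := le_max_left _ _
      have h2 : |y * z.1 + z.2| - c ≤ h y z := le_max_left _ _
      nlinarith [mul_le_mul_of_nonneg_left h1 ha, mul_le_mul_of_nonneg_left h2 hb]
    have hFint : Integrable (fun z => (a * h x z + b * h y z) ^ 2) μ := by
      refine Integrable.mono' (((hint x).const_mul 2).add ((hint y).const_mul 2))
        ((((continuous_const.mul (hcont x)).add (continuous_const.mul (hcont y))).pow
          2).aestronglyMeasurable)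
        (ae_of_all _ fun z => ?_)
      rw [Real.norm_eq_abs, abs_of_nonneg (sq_nonneg _)]
      simp only [Pi.add_apply]
      have hid : (a * h x z + b * h y z) ^ 2
          = a * h x z ^ 2 + b * h y z ^ 2 - a * b * (h x z - h y z) ^ 2 := by
        linear_combination (a * h x z ^ 2 + b * h y z ^ 2) * hab
      nlinarith [hid, mul_nonneg hb (sq_nonneg (h x z)), mul_nonneg ha (sq_nonneg (h y z)),
        mul_nonneg (mul_nonneg ha hb) (sq_nonneg (h x z - h y z)), sq_nonneg (h x z),
        sq_nonneg (h y z), mul_nonneg hb (sq_nonneg (h y z)), mul_nonneg ha (sq_nonneg (h x z))]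
    have hmono : ∫ z, h (a * x + b * y) z ^ 2 ∂μ ≤ ∫ z, (a * h x z + b * h y z) ^ 2 ∂μ := by
      refine integral_mono (hint _) hFint fun z => ?_
      exact pow_le_pow_left₀ (h0 _ _) (hpt z) 2
    have hexp : ∫ z, (a * h x z + b * h y z) ^ 2 ∂μ
        = a ^ 2 * (∫ z, h x z ^ 2 ∂μ) + (2 * a * b) * (∫ z, h x z * h y z ∂μ)
          + b ^ 2 * (∫ z, h y z ^ 2 ∂μ) := by
      have e : (fun z => (a * h x z + b * h y z) ^ 2)
          = fun z => a ^ 2 * h x z ^ 2 + ((2 * a * b) * (h x z * h y z) + b ^ 2 * h y z ^ 2) := by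
        funext z; ring
      have hBC : Integrable
          (fun z => (2 * a * b) * (h x z * h y z) + b ^ 2 * h y z ^ 2) μ :=
        ((hmul_int x y).const_mul _).add ((hint y).const_mul _)
      rw [e, integral_add ((hint x).const_mul _) hBC,
        integral_add ((hmul_int x y).const_mul _) ((hint y).const_mul _),
        integral_const_mul, integral_const_mul, integral_const_mul]
      ring
    have hfin : ∫ z, h (a * x + b * y) z ^ 2 ∂μ ≤ (a * ψ x + b * ψ y) ^ 2 := by
      have h2ab : (2 * a * b) * (∫ z, h x z * h y z ∂μ) ≤ (2 * a * b) * (ψ x * ψ y) :=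
        mul_le_mul_of_nonneg_left (hcs x y) (by positivity)
      have := hψsq x
      have := hψsq y
      calc ∫ z, h (a * x + b * y) z ^ 2 ∂μ ≤ ∫ z, (a * h x z + b * h y z) ^ 2 ∂μ := hmono
        _ = a ^ 2 * (∫ z, h x z ^ 2 ∂μ) + (2 * a * b) * (∫ z, h x z * h y z ∂μ)
            + b ^ 2 * (∫ z, h y z ^ 2 ∂μ) := hexp
        _ ≤ a ^ 2 * ψ x ^ 2 + (2 * a * b) * (ψ x * ψ y) + b ^ 2 * ψ y ^ 2 := by
            rw [hψsq x, hψsq y]; linarith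
        _ = (a * ψ x + b * ψ y) ^ 2 := by ring
    calc ψ (a * x + b * y) ≤ Real.sqrt ((a * ψ x + b * ψ y) ^ 2) := Real.sqrt_le_sqrt hfin
      _ = a * ψ x + b * ψ y := Real.sqrt_sq (by positivity)
  -- ψ is even
  have heven : ∀ t, ψ (-t) = ψ t := by
    intro t
    have hmm : μ.map (fun z : ℝ × ℝ => (z.1, -z.2)) = μ := by
      have h2 := Measure.map_prod_map (f := (id : ℝ → ℝ)) (g := fun x : ℝ => -x)
        (gaussianReal 0 1) ν measurable_id measurable_neg
      rw [Measure.map_id, hνsymm] at h2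
      have hfn : (fun z : ℝ × ℝ => (z.1, -z.2))
          = Prod.map (id : ℝ → ℝ) (fun x : ℝ => -x) := by funext z; rfl
      rw [hμdef, hfn, ← h2]
    have : ∫ z, h (-t) z ^ 2 ∂μ = ∫ z, h t z ^ 2 ∂μ := by
      conv_lhs => rw [← hmm]
      rw [integral_map (by fun_prop) (f := fun z => h (-t) z ^ 2) (((hcont (-t)).pow 2).aestronglyMeasurable)]
      refine integral_congr_ae (ae_of_all _ fun z => ?_)
      have : h (-t) (z.1, -z.2) = h t z := by
        simp only [hhdef]
        congr 1
        rw [show -t * z.1 + -z.2 = -(t * z.1 + z.2) by ring, abs_neg]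
      simp only [this]
    simp only [hψdef, this]
  -- ψ is monotone on [0, ∞)
  have hmonoψ : ∀ a b : ℝ, 0 ≤ a → a ≤ b → ψ a ≤ ψ b := by
    intro a b ha hab
    rcases eq_or_lt_of_le (ha.trans hab) with hb | hb
    · have : a = 0 := le_antisymm (hab.trans hb.symm.le) ha
      rw [this, ← hb]
    · set θ : ℝ := (a + b) / (2 * b) with hθdef
      have hθ0 : 0 ≤ θ := by positivity
      have hθ1 : 0 ≤ 1 - θ := by
        rw [hθdef, sub_nonneg, div_le_one (by positivity)]; linarith
      have hkey := key b (-b) θ (1 - θ) hθ0 hθ1 (by ring)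
      rw [heven b] at hkey
      have harg : θ * b + (1 - θ) * (-b) = a := by
        field_simp [hθdef]
        rw [hθdef]; field_simp; ring
      rw [harg] at hkey
      linarith [hψ0 b]
  -- relating D to ψ
  have hDψ : ∀ g : ℝ × ℝ, D g = Real.sqrt δ * ψ (Real.sqrt (g.1 ^ 2 + g.2 ^ 2)) - g.1 := by
    intro g; rw [hD]
  -- convexity of D
  have hDconv : ConvexOn ℝ Set.univ D := by
    refine ⟨convex_univ, fun g _ g' _ a b ha hb hab => ?_⟩
    rw [hDψ, hDψ, hDψ]
    have habfst : (a • g + b • g').1 = a * g.1 + b * g'.1 := rfl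
    have habsnd : (a • g + b • g').2 = a * g.2 + b * g'.2 := rfl
    have hr : ∀ u v : ℝ, Real.sqrt (u ^ 2 + v ^ 2) = ‖(⟨u, v⟩ : ℂ)‖ := by
      intro u v
      rw [Complex.norm_def, Complex.normSq_mk]
      ring_nf
    have tri : Real.sqrt ((a • g + b • g').1 ^ 2 + (a • g + b • g').2 ^ 2)
        ≤ a * Real.sqrt (g.1 ^ 2 + g.2 ^ 2) + b * Real.sqrt (g'.1 ^ 2 + g'.2 ^ 2) := by
      rw [habfst, habsnd, hr, hr, hr]
      have e : (⟨a * g.1 + b * g'.1, a * g.2 + b * g'.2⟩ : ℂ)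
          = (a : ℂ) * ⟨g.1, g.2⟩ + (b : ℂ) * ⟨g'.1, g'.2⟩ := by
        apply Complex.ext <;> simp
      rw [e]
      calc ‖(a : ℂ) * ⟨g.1, g.2⟩ + (b : ℂ) * ⟨g'.1, g'.2⟩‖
          ≤ ‖(a : ℂ) * ⟨g.1, g.2⟩‖ + ‖(b : ℂ) * ⟨g'.1, g'.2⟩‖ :=
            norm_add_le _ _
        _ = a * ‖(⟨g.1, g.2⟩ : ℂ)‖ + b * ‖(⟨g'.1, g'.2⟩ : ℂ)‖ := by
            rw [norm_mul, norm_mul, Complex.norm_real, Complex.norm_real, Real.norm_eq_abs, Real.norm_eq_abs, abs_of_nonneg ha, abs_of_nonneg hb]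
    have hψle : ψ (Real.sqrt ((a • g + b • g').1 ^ 2 + (a • g + b • g').2 ^ 2))
        ≤ a * ψ (Real.sqrt (g.1 ^ 2 + g.2 ^ 2)) + b * ψ (Real.sqrt (g'.1 ^ 2 + g'.2 ^ 2)) :=
      (hmonoψ _ _ (Real.sqrt_nonneg _) tri).trans
        (key (Real.sqrt (g.1 ^ 2 + g.2 ^ 2)) (Real.sqrt (g'.1 ^ 2 + g'.2 ^ 2)) a b ha hb hab)
    have hmul := mul_le_mul_of_nonneg_left hψle (Real.sqrt_nonneg δ)
    have hs : (a • g + b • g').1 = a * g.1 + b * g'.1 := rfl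
    calc Real.sqrt δ * ψ (Real.sqrt ((a • g + b • g').1 ^ 2 + (a • g + b • g').2 ^ 2))
          - (a • g + b • g').1
        ≤ Real.sqrt δ * (a * ψ (Real.sqrt (g.1 ^ 2 + g.2 ^ 2))
            + b * ψ (Real.sqrt (g'.1 ^ 2 + g'.2 ^ 2))) - (a • g + b • g').1 :=
          sub_le_sub_right hmul _
      _ = a * (Real.sqrt δ * ψ (Real.sqrt (g.1 ^ 2 + g.2 ^ 2)) - g.1)
            + b * (Real.sqrt δ * ψ (Real.sqrt (g'.1 ^ 2 + g'.2 ^ 2)) - g'.1) := by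
          rw [hs]; ring
  -- continuity of D and closedness of S
  have hDcont : Continuous D :=
    continuousOn_univ.1 (hDconv.continuousOn isOpen_univ)
  have hSclosed : IsClosed {g : ℝ × ℝ | D g ≤ 0} := isClosed_le hDcont continuous_const
  have hSconv : Convex ℝ {g : ℝ × ℝ | D g ≤ 0} := by
    have := hDconv.convex_le 0
    simpa using this
  refine ⟨hSclosed, hSconv, ?_⟩
  -- the objective function
  set f : ℝ × ℝ → ℝ := fun g => (1 / 2) * (g.2 - β / σ) ^ 2 + (1 / 2) * g.1 ^ 2 with hfdef
  have hfcont : Continuous f := by rw [hfdef]; fun_prop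
  clear_value f
  obtain ⟨g₀, hg₀⟩ := hne
  set K : Set (ℝ × ℝ) := {g | D g ≤ 0} ∩ {g | f g ≤ f g₀} with hKdef
  have hKne : K.Nonempty := ⟨g₀, hg₀, le_refl (f g₀)⟩
  have hKclosed : IsClosed K := hSclosed.inter (isClosed_le hfcont continuous_const)
  have hKbdd : Bornology.IsBounded K := by
    rw [isBounded_iff_forall_norm_le]
    refine ⟨1 + 2 * f g₀ + |β / σ|, fun g hg => ?_⟩
    have hfg : f g ≤ f g₀ := hg.2
    have hf0' : 0 ≤ f g := by rw [hfdef]; positivity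
    have h1 : |g.1| ≤ 1 + g.1 ^ 2 := by nlinarith [sq_nonneg (|g.1| - 1), sq_abs g.1, abs_nonneg g.1]
    have h2 : |g.2 - β / σ| ≤ 1 + (g.2 - β / σ) ^ 2 := by
      nlinarith [sq_nonneg (|g.2 - β / σ| - 1), sq_abs (g.2 - β / σ), abs_nonneg (g.2 - β / σ)]
    have hb1 : |g.1| ≤ 1 + 2 * f g₀ := by
      have : g.1 ^ 2 ≤ 2 * f g₀ := by
        simp only [hfdef] at hfg ⊢; nlinarith [sq_nonneg (g.2 - β / σ)]
      linarith
    have hb2 : |g.2| ≤ 1 + 2 * f g₀ + |β / σ| := by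
      have h3 : (g.2 - β / σ) ^ 2 ≤ 2 * f g₀ := by
        simp only [hfdef] at hfg ⊢; nlinarith [sq_nonneg g.1]
      have : |g.2| ≤ |g.2 - β / σ| + |β / σ| := by
        calc |g.2| = |(g.2 - β / σ) + β / σ| := by ring_nf
          _ ≤ |g.2 - β / σ| + |β / σ| := abs_add_le _ _
      linarith
    rw [Prod.norm_def]
    simp only [Real.norm_eq_abs]
    refine max_le ?_ hb2
    linarith [abs_nonneg (β / σ)]
  have hKcomp : IsCompact K := Metric.isCompact_of_isClosed_isBounded hKclosed hKbdd
  obtain ⟨g, hgK, hgmin⟩ := hKcomp.exists_isMinOn hKne hfcont.continuousOn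
  have hgS : D g ≤ 0 := hgK.1
  have hgopt : ∀ g' : ℝ × ℝ, D g' ≤ 0 → f g ≤ f g' := by
    intro g' hg'
    by_cases hcase : f g' ≤ f g₀
    · exact hgmin ⟨hg', hcase⟩
    · push_neg at hcase
      have : f g ≤ f g₀ := hgmin ⟨hg₀, le_refl (f g₀)⟩
      linarith
  refine ⟨g, ⟨hgS, fun g' hg' => by simpa [hfdef] using hgopt g' hg'⟩, ?_⟩
  rintro g' ⟨hg'S, hg'opt⟩
  have h1 : f g ≤ f g' := hgopt g' hg'S
  have h2 : f g' ≤ f g := by simpa [hfdef] using hg'opt g hgS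
  -- strict convexity: midpoint argument
  set m : ℝ × ℝ := (1/2 : ℝ) • g + (1/2 : ℝ) • g' with hmdef
  have hmS : D m ≤ 0 := hSconv hgS hg'S (by norm_num) (by norm_num) (by norm_num)
  have h3 : f g ≤ f m := hgopt m hmS
  have hm1 : m.1 = (1/2) * g.1 + (1/2) * g'.1 := rfl
  have hm2 : m.2 = (1/2) * g.2 + (1/2) * g'.2 := rfl
  have e1 : g'.1 = g.1 ∧ g'.2 = g.2 := by
    constructor <;>
    · simp only [hfdef, hm1, hm2] at h1 h2 h3
      nlinarith [sq_nonneg (g.1 - g'.1), sq_nonneg (g.2 - g'.2)]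
  exact Prod.ext e1.1 e1.2
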